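/- Let α ∈ (3/2,2) and let u ∈ H¹(0,1) be piecewise linear on a uniform mesh with u(0)=u(1)=0 (a finite element function). Set φ = −ₓI₁^{α−1}(P_V u′) where P_V ψ = ψ − Γ(α)(ₓI₁^{α−1}ψ)(0). Then the bilinear form a(u,φ) = −∫₀¹ u′(x) ᴿD₁^{α−1}φ(x) dx satisfies a(u,φ) = ‖u′‖²_{L²(0,1)}. -/

import Mathlib

open MeasureTheory Set

/-- Right-sided Riemann-Liouville fractional integral of order `γ`. -/
noncomputable def rightFracInt (γ : ℝ) (f : ℝ → ℝ) (x : ℝ) : ℝ :=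
  (1 / Real.Gamma γ) * ∫ t in x..(1:ℝ), (t - x) ^ (γ - 1) * f t

/-- Right-sided Riemann-Liouville derivative of order `β ∈ (0,1)`. -/
noncomputable def rightRLDeriv (β : ℝ) (u : ℝ → ℝ) (x : ℝ) : ℝ :=
  - deriv (rightFracInt (1 - β) u) x

/-- The operator `P_V ψ = ψ - Γ(α)(ₓI₁^{α-1} ψ)(0)`. -/
noncomputable def PV (α : ℝ) (ψ : ℝ → ℝ) (x : ℝ) : ℝ :=
  ψ x - Real.Gamma α * rightFracInt (α - 1) ψ 0

theorem realBeta {p q : ℝ} (hp : 0 < p) (hq : 0 < q) :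
    ∫ x in (0:ℝ)..1, x ^ (p-1) * (1-x) ^ (q-1)
      = Real.Gamma p * Real.Gamma q / Real.Gamma (p+q) := by
  have key := Complex.Gamma_mul_Gamma_eq_betaIntegral (s := (p:ℂ)) (t := (q:ℂ))
    (by simpa using hp) (by simpa using hq)
  have hbeta : Complex.betaIntegral (p:ℂ) (q:ℂ)
      = ((∫ x in (0:ℝ)..1, x ^ (p-1) * (1-x) ^ (q-1) : ℝ) : ℂ) := by
    rw [Complex.betaIntegral, ← intervalIntegral.integral_ofReal]
    apply intervalIntegral.integral_congr
    intro x hx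
    rw [Set.uIcc_of_le (by norm_num : (0:ℝ) ≤ 1)] at hx
    push_cast
    rw [Complex.ofReal_cpow hx.1, Complex.ofReal_cpow (by linarith [hx.2] : (0:ℝ) ≤ 1 - x)]
    push_cast
    ring
  have hpq : ((p:ℂ) + q) = ((p+q : ℝ) : ℂ) := by push_cast; ring
  rw [hbeta, hpq, Complex.Gamma_ofReal, Complex.Gamma_ofReal, Complex.Gamma_ofReal,
    ← Complex.ofReal_mul, ← Complex.ofReal_mul, Complex.ofReal_inj] at key
  rw [eq_div_iff (ne_of_gt (Real.Gamma_pos_of_pos (by linarith))), mul_comm]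
  exact key.symm


theorem betaScaled {p q x b : ℝ} (hp : 0 < p) (hq : 0 < q) (hxb : x < b) :
    ∫ t in x..b, (t-x) ^ (p-1) * (b-t) ^ (q-1)
      = (b-x) ^ (p+q-1) * (Real.Gamma p * Real.Gamma q / Real.Gamma (p+q)) := by
  have hL : 0 < b - x := by linarith
  have h1 : ∫ t in x..b, (t-x) ^ (p-1) * (b-t) ^ (q-1)
      = ∫ τ in (0:ℝ)..(b-x), τ ^ (p-1) * ((b-x)-τ) ^ (q-1) := by
    have := intervalIntegral.integral_comp_sub_right (a := x) (b := b)
      (fun τ => τ ^ (p-1) * ((b-x)-τ) ^ (q-1)) x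
    simp only [sub_sub_sub_cancel_right, sub_self] at this
    exact this
  have h2 : (b-x) • ∫ σ in (0:ℝ)..1, (fun τ => τ ^ (p-1) * ((b-x)-τ) ^ (q-1)) ((b-x) * σ)
      = ∫ τ in (0:ℝ)..(b-x), τ ^ (p-1) * ((b-x)-τ) ^ (q-1) := by
    have := intervalIntegral.smul_integral_comp_mul_left (a := (0:ℝ)) (b := 1)
      (fun τ => τ ^ (p-1) * ((b-x)-τ) ^ (q-1)) (b-x)
    simpa using this
  have h3 : ∫ σ in (0:ℝ)..1, (fun τ => τ ^ (p-1) * ((b-x)-τ) ^ (q-1)) ((b-x) * σ)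
      = (b-x) ^ (p-1) * (b-x) ^ (q-1) * ∫ σ in (0:ℝ)..1, σ ^ (p-1) * (1-σ) ^ (q-1) := by
    rw [← intervalIntegral.integral_const_mul]
    apply intervalIntegral.integral_congr
    intro σ hσ
    rw [Set.uIcc_of_le (by norm_num : (0:ℝ) ≤ 1)] at hσ
    simp only
    rw [show (b-x) - (b-x) * σ = (b-x) * (1-σ) by ring,
      Real.mul_rpow hL.le hσ.1, Real.mul_rpow hL.le (by linarith [hσ.2])]
    ring
  rw [h1, ← h2, h3, realBeta hp hq, smul_eq_mul]
  rw [show p + q - 1 = 1 + (p-1) + (q-1) by ring,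
    Real.rpow_add hL, Real.rpow_add hL, Real.rpow_one]
  ring

theorem powInt0 {e t y : ℝ} (he : -1 < e) (hty : t ≤ y) :
    ∫ s in t..y, (s-t) ^ e = (y-t) ^ (e+1) / (e+1) := by
  rcases eq_or_lt_of_le hty with rfl | h
  · simp [Real.zero_rpow (by linarith : e + 1 ≠ 0)]
  · have := betaScaled (p := e+1) (q := 1) (x := t) (b := y) (by linarith) one_pos h
    simp only [add_sub_cancel_right, sub_self] at this
    rw [show (∫ s in t..y, (s-t) ^ e) = ∫ s in t..y, (s-t) ^ e * (y-s) ^ (0:ℝ) by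
      apply intervalIntegral.integral_congr; intro s _
      simp only [Real.rpow_zero, mul_one]]
    have hΓ : Real.Gamma (e+1) ≠ 0 := ne_of_gt (Real.Gamma_pos_of_pos (by linarith))
    rw [this, Real.Gamma_one, Real.Gamma_add_one (by linarith : e + 1 ≠ 0), mul_one,
      mul_comm (e+1) _, div_mul_eq_div_div, div_self hΓ, mul_one_div]

theorem II_pow {e x a b : ℝ} (he : -1 < e) :
    IntervalIntegrable (fun t => (t - x) ^ e) volume a b := by
  have := (intervalIntegral.intervalIntegrable_rpow' (a := a - x) (b := b - x) he).comp_sub_right x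
  simpa using this

theorem powInt {e t a b : ℝ} (he : -1 < e) (hta : t ≤ a) (hab : a ≤ b) :
    ∫ s in a..b, (s-t) ^ e = ((b-t) ^ (e+1) - (a-t) ^ (e+1)) / (e+1) := by
  have h1 : (∫ s in t..a, (s-t) ^ e) + ∫ s in a..b, (s-t) ^ e = ∫ s in t..b, (s-t) ^ e :=
    intervalIntegral.integral_add_adjacent_intervals (II_pow he) (II_pow he)
  rw [powInt0 he hta, powInt0 he (hta.trans hab)] at h1
  rw [sub_div]
  linarith

theorem II_pow_mul {e x a b C : ℝ} (he : -1 < e) {g : ℝ → ℝ}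
    (hg : AEStronglyMeasurable g (volume.restrict (Set.uIoc a b)))
    (hbd : ∀ᵐ y ∂(volume.restrict (Set.uIoc a b)), |g y| ≤ C) :
    IntervalIntegrable (fun t => (t - x) ^ e * g t) volume a b := by
  have hpow : IntervalIntegrable (fun t => (t - x) ^ e) volume a b := II_pow he
  rw [intervalIntegrable_iff] at hpow ⊢
  exact (hpow.bdd_mul hg (by simpa [Real.norm_eq_abs] using hbd)).congr
    (Filter.Eventually.of_forall fun y => mul_comm _ _)

theorem cont_maxpow {b e : ℝ} (he : 0 < e) : Continuous fun t : ℝ => (max (b-t) 0) ^ e := by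
  apply Continuous.comp (g := fun y : ℝ => y ^ e)
  · rw [continuous_iff_continuousAt]
    intro y
    exact Real.continuousAt_rpow_const y e (Or.inr he.le)
  · exact (continuous_const.sub continuous_id).max continuous_const

theorem bd_maxpow {b e : ℝ} (he : 0 ≤ e) (hb : b ≤ 1) {y : ℝ} (hy : 0 ≤ y) :
    |(max (b-y) 0) ^ e| ≤ 1 := by
  rw [abs_of_nonneg (Real.rpow_nonneg (le_max_right _ _) e)]
  exact Real.rpow_le_one (le_max_right _ _) (by rcases max_cases (b-y) 0 with ⟨h,_⟩|⟨h,_⟩ <;>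
    rw [h] <;> [linarith; norm_num]) he

theorem II_powmax {α x b a' b' : ℝ} (hα : α ∈ Set.Ioo (3/2 : ℝ) 2) (hb1 : b ≤ 1)
    (ha' : 0 < a') (hb' : 0 < b') :
    IntervalIntegrable (fun t => (t-x) ^ (1-α) * (max (b-t) 0) ^ (α-1)) volume a' b' := by
  obtain ⟨hα1, hα2⟩ := hα
  refine II_pow_mul (C := 1) (by linarith) ((cont_maxpow (by linarith)).aestronglyMeasurable.restrict) ?_
  refine (MeasureTheory.ae_restrict_mem measurableSet_uIoc).mono fun y hy => ?_
  refine bd_maxpow (by linarith) hb1 ?_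
  rcases Set.mem_uIoc.1 hy with h | h
  · linarith [h.1, min_le_left a' b', lt_min ha' hb']
  · linarith [h.1, lt_min ha' hb']

theorem Qval {α x b : ℝ} (hα : α ∈ Set.Ioo (3/2 : ℝ) 2) (hx0 : 0 < x) (hx1 : x < 1)
    (hb1 : b ≤ 1) :
    ∫ t in x..1, (t-x) ^ (1-α) * (max (b-t) 0) ^ (α-1)
      = max (b-x) 0 * (Real.Gamma (2-α) * Real.Gamma α) := by
  obtain ⟨hα1, hα2⟩ := hα
  have h1α : (-1:ℝ) < 1 - α := by linarith
  have he : (0:ℝ) < α - 1 := by linarith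
  rcases le_or_gt b x with hbx | hbx
  · rw [max_eq_right (by linarith : b - x ≤ 0), zero_mul]
    rw [show (∫ t in x..1, (t-x) ^ (1-α) * (max (b-t) 0) ^ (α-1))
        = ∫ t in x..1, (0:ℝ) by
      apply intervalIntegral.integral_congr
      intro t ht
      rw [Set.uIcc_of_le hx1.le] at ht
      show (t - x) ^ (1-α) * (max (b-t) 0) ^ (α-1) = 0
      rw [max_eq_right (by linarith [ht.1] : b - t ≤ 0), Real.zero_rpow (by linarith), mul_zero]]
    simp
  · have hI1 := II_powmax (x := x) ⟨hα1, hα2⟩ hb1 hx0 (by linarith : (0:ℝ) < b)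
    have hI2 := II_powmax (x := x) ⟨hα1, hα2⟩ hb1 (by linarith : (0:ℝ) < b) one_pos
    rw [← intervalIntegral.integral_add_adjacent_intervals hI1 hI2]
    have h2 : (∫ t in b..1, (t-x) ^ (1-α) * (max (b-t) 0) ^ (α-1)) = 0 := by
      rw [show (∫ t in b..1, (t-x) ^ (1-α) * (max (b-t) 0) ^ (α-1))
          = ∫ t in b..1, (0:ℝ) by
        apply intervalIntegral.integral_congr
        intro t ht
        rw [Set.uIcc_of_le hb1] at ht
        show (t - x) ^ (1-α) * (max (b-t) 0) ^ (α-1) = 0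
        rw [max_eq_right (by linarith [ht.1] : b - t ≤ 0), Real.zero_rpow (by linarith),
          mul_zero]]
      simp
    have h1 : (∫ t in x..b, (t-x) ^ (1-α) * (max (b-t) 0) ^ (α-1))
        = (b-x) * (Real.Gamma (2-α) * Real.Gamma α) := by
      rw [show (∫ t in x..b, (t-x) ^ (1-α) * (max (b-t) 0) ^ (α-1))
          = ∫ t in x..b, (t-x) ^ ((2-α)-1) * (b-t) ^ (α-1) by
        apply intervalIntegral.integral_congr
        intro t ht
        rw [Set.uIcc_of_le hbx.le] at ht
        show (t - x) ^ (1-α) * (max (b-t) 0) ^ (α-1) = (t-x) ^ ((2-α)-1) * (b-t) ^ (α-1)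
        rw [max_eq_left (by linarith [ht.2] : (0:ℝ) ≤ b - t), show (2-α)-1 = 1-α by ring]]
      rw [betaScaled (by linarith : (0:ℝ) < 2-α) (by linarith : (0:ℝ) < α) hbx]
      rw [show (2-α) + α - 1 = 1 by ring, show (2-α) + α = 2 by ring, Real.rpow_one,
        Real.Gamma_two, div_one]
    rw [h1, h2, add_zero, max_eq_left (by linarith : (0:ℝ) ≤ b - x)]

theorem meshDisj {m : ℕ} (hm : 0 < m) :
    (↑(Finset.range m) : Set ℕ).Pairwise
      (Function.onFun Disjoint fun k => Set.Ioo ((k:ℝ)/m) (((k:ℝ)+1)/m)) := by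
  have hmr : (0:ℝ) < m := by exact_mod_cast hm
  have key : ∀ i j : ℕ, i < j →
      Disjoint (Set.Ioo ((i:ℝ)/m) (((i:ℝ)+1)/m)) (Set.Ioo ((j:ℝ)/m) (((j:ℝ)+1)/m)) := by
    intro i j hij
    apply Set.Ioo_disjoint_Ioo.2
    have h1 : ((i:ℝ)+1)/m ≤ (j:ℝ)/m := by
      gcongr
      push_cast
      exact_mod_cast Nat.succ_le_of_lt hij
    calc min (((i:ℝ)+1)/m) (((j:ℝ)+1)/m) ≤ ((i:ℝ)+1)/m := min_le_left _ _
      _ ≤ (j:ℝ)/m := h1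
      _ ≤ max ((i:ℝ)/m) ((j:ℝ)/m) := le_max_right _ _
  intro i _ j _ hij
  rcases lt_or_gt_of_ne hij with h | h
  · exact key i j h
  · exact (key j i h).symm

theorem meshNull {m : ℕ} (hm : 0 < m) :
    volume (Set.Ioo (0:ℝ) 1 \ ⋃ k ∈ Finset.range m, Set.Ioo ((k:ℝ)/m) (((k:ℝ)+1)/m)) = 0 := by
  have hmr : (0:ℝ) < m := by exact_mod_cast hm
  set U := ⋃ k ∈ Finset.range m, Set.Ioo ((k:ℝ)/m) (((k:ℝ)+1)/m) with hU
  have hsub : U ⊆ Set.Ioo (0:ℝ) 1 := by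
    apply Set.iUnion₂_subset
    intro k hk
    apply Set.Ioo_subset_Ioo (by positivity)
    rw [div_le_one hmr]
    have : k < m := Finset.mem_range.1 hk
    push_cast
    exact_mod_cast Nat.succ_le_of_lt this
  have hmeas : MeasurableSet U :=
    MeasurableSet.biUnion (Finset.range m).countable_toSet fun _ _ => measurableSet_Ioo
  have hvol : volume U = 1 := by
    rw [hU, measure_biUnion_finset (meshDisj hm) fun _ _ => measurableSet_Ioo]
    have : ∀ k ∈ Finset.range m, volume (Set.Ioo ((k:ℝ)/m) (((k:ℝ)+1)/m))
        = ENNReal.ofReal (1/m) := by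
      intro k _
      rw [Real.volume_Ioo]
      congr 1
      field_simp
      ring
    rw [Finset.sum_congr rfl this, Finset.sum_const, Finset.card_range, nsmul_eq_mul,
      ← ENNReal.ofReal_natCast, ← ENNReal.ofReal_mul (by positivity)]
    rw [show (m:ℝ) * (1/m) = 1 by field_simp]
    exact ENNReal.ofReal_one
  rw [measure_diff hsub hmeas.nullMeasurableSet (by rw [hvol]; exact ENNReal.one_ne_top), hvol,
    Real.volume_Ioo]
  norm_num

theorem Jval {α : ℝ} (hα : α ∈ Set.Ioo (3/2 : ℝ) 2) {m : ℕ} (hm : 0 < m)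
    (A : ℕ → ℝ) (c : ℝ) (d : ℝ → ℝ)
    (hd : ∀ k, k < m → ∀ x ∈ Set.Ioo ((k:ℝ)/m) (((k:ℝ)+1)/m), d x = A k)
    {t : ℝ} (ht0 : 0 ≤ t) (ht1 : t ≤ 1) :
    rightFracInt (α-1) (fun s => d s - c) t
      = (1/Real.Gamma α) * ∑ k ∈ Finset.range m, (A k - c) *
          ((max (((k:ℝ)+1)/m - t) 0) ^ (α-1) - (max ((k:ℝ)/m - t) 0) ^ (α-1)) := by
  obtain ⟨hα1, hα2⟩ := hα
  have hmr : (0:ℝ) < m := by exact_mod_cast hm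
  have he : (-1:ℝ) < α - 1 - 1 := by linarith
  have hαne : α - 1 ≠ 0 := by intro h; rw [sub_eq_zero] at h; linarith [h]
  -- the integral over each piece
  have piece : ∀ k, k < m →
      (∫ s in Set.Ioo t 1 ∩ Set.Ioo ((k:ℝ)/m) (((k:ℝ)+1)/m), (s-t) ^ (α-1-1) * (d s - c))
        = (A k - c) * (((max (((k:ℝ)+1)/m - t) 0) ^ (α-1)
            - (max ((k:ℝ)/m - t) 0) ^ (α-1)) / (α-1)) := by
    intro k hk
    have hk1 : ((k:ℝ)+1)/m ≤ 1 := by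
      rw [div_le_one hmr]; exact_mod_cast Nat.succ_le_of_lt hk
    have hkk : (k:ℝ)/m < ((k:ℝ)+1)/m := by gcongr <;> linarith
    have hEq : Set.Ioo t 1 ∩ Set.Ioo ((k:ℝ)/m) (((k:ℝ)+1)/m)
        = Set.Ioo (max t ((k:ℝ)/m)) (((k:ℝ)+1)/m) := by
      rw [Set.Ioo_inter_Ioo, min_eq_right hk1]
    rw [hEq]
    have hcongr : Set.EqOn (fun s => (s-t) ^ (α-1-1) * (d s - c))
        (fun s => (s-t) ^ (α-1-1) * (A k - c))
        (Set.Ioo (max t ((k:ℝ)/m)) (((k:ℝ)+1)/m)) := by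
      intro s hs
      have : s ∈ Set.Ioo ((k:ℝ)/m) (((k:ℝ)+1)/m) :=
        ⟨lt_of_le_of_lt (le_max_right _ _) hs.1, hs.2⟩
      simp only [hd k hk s this]
    rw [MeasureTheory.setIntegral_congr_fun measurableSet_Ioo hcongr]
    rcases le_or_gt (((k:ℝ)+1)/m) (max t ((k:ℝ)/m)) with hle | hlt
    · -- empty interval; t ≥ (k+1)/m
      have htk : ((k:ℝ)+1)/m ≤ t := by
        rcases max_cases t ((k:ℝ)/m) with ⟨h,_⟩|⟨h,h2⟩
        · rwa [h] at hle
        · rw [h] at hle; linarith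
      rw [Set.Ioo_eq_empty (by exact not_lt.2 hle), MeasureTheory.setIntegral_empty]
      rw [max_eq_right (by linarith : ((k:ℝ)+1)/m - t ≤ 0),
        max_eq_right (by linarith [hkk] : (k:ℝ)/m - t ≤ 0)]
      rw [Real.zero_rpow hαne]
      ring
    · -- nonempty
      rw [← MeasureTheory.integral_Ioc_eq_integral_Ioo,
        ← intervalIntegral.integral_of_le hlt.le]
      have : (∫ s in (max t ((k:ℝ)/m))..(((k:ℝ)+1)/m), (s-t) ^ (α-1-1) * (A k - c))
          = (∫ s in (max t ((k:ℝ)/m))..(((k:ℝ)+1)/m), (s-t) ^ (α-1-1)) * (A k - c) :=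
        intervalIntegral.integral_mul_const _ _
      rw [this, powInt he (le_max_left _ _) hlt.le]
      have h1 : ((k:ℝ)+1)/m - t = max (((k:ℝ)+1)/m - t) 0 := by
        rw [max_eq_left]
        have : t ≤ max t ((k:ℝ)/m) := le_max_left _ _
        linarith [this.trans_lt hlt]
      have h2 : max t ((k:ℝ)/m) - t = max ((k:ℝ)/m - t) 0 := by
        rcases le_total ((k:ℝ)/m) t with h | h
        · rw [max_eq_left h, max_eq_right (by linarith), sub_self]
        · rw [max_eq_right h, max_eq_left (by linarith)]
      rw [show α - 1 - 1 + 1 = α - 1 by ring, ← h1, ← h2]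
      ring
  -- assemble
  simp only [rightFracInt]
  rw [intervalIntegral.integral_of_le ht1, MeasureTheory.integral_Ioc_eq_integral_Ioo]
  have hae : Set.Ioo t 1 =ᵐ[volume]
      ⋃ k ∈ Finset.range m, (Set.Ioo t 1 ∩ Set.Ioo ((k:ℝ)/m) (((k:ℝ)+1)/m)) := by
    have hrw : ⋃ k ∈ Finset.range m, (Set.Ioo t 1 ∩ Set.Ioo ((k:ℝ)/m) (((k:ℝ)+1)/m))
        = Set.Ioo t 1 ∩ ⋃ k ∈ Finset.range m, Set.Ioo ((k:ℝ)/m) (((k:ℝ)+1)/m) := by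
      rw [Set.inter_iUnion₂]
    rw [hrw, MeasureTheory.ae_eq_set]
    constructor
    · rw [Set.diff_self_inter]
      apply MeasureTheory.measure_mono_null ?_ (meshNull hm)
      apply Set.diff_subset_diff_left
      exact Set.Ioo_subset_Ioo ht0 le_rfl
    · rw [Set.diff_eq_empty.2 Set.inter_subset_left]
      exact MeasureTheory.measure_empty
  rw [MeasureTheory.setIntegral_congr_set hae]
  rw [MeasureTheory.integral_biUnion_finset (Finset.range m)
    (fun _ _ => measurableSet_Ioo.inter measurableSet_Ioo)
    ?_ ?_]
  · rw [Finset.sum_congr rfl fun k hk => piece k (Finset.mem_range.1 hk)]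
    rw [Finset.mul_sum, Finset.mul_sum]
    apply Finset.sum_congr rfl
    intro k _
    have hΓ : Real.Gamma α = (α - 1) * Real.Gamma (α - 1) := by
      rw [show α = α - 1 + 1 by ring, Real.Gamma_add_one hαne]
      ring_nf
    rw [hΓ]
    have hΓ1 : Real.Gamma (α-1) ≠ 0 := ne_of_gt (Real.Gamma_pos_of_pos (by linarith))
    generalize (max (((k:ℝ)+1)/m - t) 0) ^ (α-1) = P1
    generalize (max ((k:ℝ)/m - t) 0) ^ (α-1) = P2
    field_simp
  · -- pairwise disjoint mono
    intro i hi j hj hij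
    simp only [Function.onFun]
    exact ((meshDisj hm) hi hj hij).mono Set.inter_subset_right Set.inter_subset_right
  · -- integrability on pieces
    intro k hk
    have hk' := Finset.mem_range.1 hk
    have hk1 : ((k:ℝ)+1)/m ≤ 1 := by
      rw [div_le_one hmr]; exact_mod_cast Nat.succ_le_of_lt hk'
    have hEq : Set.Ioo t 1 ∩ Set.Ioo ((k:ℝ)/m) (((k:ℝ)+1)/m)
        = Set.Ioo (max t ((k:ℝ)/m)) (((k:ℝ)+1)/m) := by
      rw [Set.Ioo_inter_Ioo, min_eq_right hk1]
    rw [MeasureTheory.IntegrableOn, hEq]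
    rcases le_or_gt (((k:ℝ)+1)/m) (max t ((k:ℝ)/m)) with hle | hlt
    · rw [Set.Ioo_eq_empty (not_lt.2 hle)]
      simp
    · have hII : IntervalIntegrable (fun s => (s-t) ^ (α-1-1) * (A k - c)) volume
          (max t ((k:ℝ)/m)) (((k:ℝ)+1)/m) := (II_pow he).mul_const _
      have hIO : MeasureTheory.IntegrableOn (fun s => (s-t) ^ (α-1-1) * (A k - c))
          (Set.Ioo (max t ((k:ℝ)/m)) (((k:ℝ)+1)/m)) volume := by
        apply MeasureTheory.IntegrableOn.mono_set
          ((intervalIntegrable_iff_integrableOn_Ioc_of_le hlt.le).1 hII) Set.Ioo_subset_Ioc_self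
      apply hIO.congr_fun ?_ measurableSet_Ioo
      intro s hs
      have : s ∈ Set.Ioo ((k:ℝ)/m) (((k:ℝ)+1)/m) :=
        ⟨lt_of_le_of_lt (le_max_right _ _) hs.1, hs.2⟩
      simp only [hd k hk' s this]

theorem Fval {α : ℝ} (hα : α ∈ Set.Ioo (3/2 : ℝ) 2) {m : ℕ} (hm : 0 < m)
    (A : ℕ → ℝ) (c : ℝ) (d : ℝ → ℝ)
    (hd : ∀ k, k < m → ∀ x ∈ Set.Ioo ((k:ℝ)/m) (((k:ℝ)+1)/m), d x = A k)
    {x : ℝ} (hx0 : 0 < x) (hx1 : x < 1) :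
    rightFracInt (2-α) (fun y => - rightFracInt (α-1) (fun s => d s - c) y) x
      = - ∑ k ∈ Finset.range m, (A k - c) *
          (max (((k:ℝ)+1)/m - x) 0 - max ((k:ℝ)/m - x) 0) := by
  obtain ⟨hα1, hα2⟩ := hα
  have hmr : (0:ℝ) < m := by exact_mod_cast hm
  have hG2 : Real.Gamma (2-α) ≠ 0 := ne_of_gt (Real.Gamma_pos_of_pos (by linarith))
  have hGα : Real.Gamma α ≠ 0 := ne_of_gt (Real.Gamma_pos_of_pos (by linarith))
  show (1 / Real.Gamma (2-α)) *
      (∫ y in x..(1:ℝ), (y - x) ^ ((2-α) - 1) *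
        (- rightFracInt (α-1) (fun s => d s - c) y)) = _
  have h1 : (∫ y in x..(1:ℝ), (y - x) ^ ((2-α)-1) *
        (- rightFracInt (α-1) (fun s => d s - c) y))
      = ∫ y in x..(1:ℝ), (-(1/Real.Gamma α)) * ∑ k ∈ Finset.range m, ((A k - c) *
          ((y - x) ^ (1-α) * (max (((k:ℝ)+1)/m - y) 0) ^ (α-1)
            - (y - x) ^ (1-α) * (max ((k:ℝ)/m - y) 0) ^ (α-1))) := by
    apply intervalIntegral.integral_congr
    intro y hy
    rw [Set.uIcc_of_le hx1.le] at hy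
    simp only
    rw [Jval ⟨hα1, hα2⟩ hm A c d hd (by linarith [hy.1] : (0:ℝ) ≤ y) hy.2,
      show (2-α)-1 = 1-α by ring, Finset.mul_sum, Finset.mul_sum,
      ← Finset.sum_neg_distrib, Finset.mul_sum]
    apply Finset.sum_congr rfl
    intro k _
    ring
  rw [h1, intervalIntegral.integral_const_mul]
  have hII : ∀ b : ℝ, b ≤ 1 → IntervalIntegrable
      (fun y => (y - x) ^ (1-α) * (max (b - y) 0) ^ (α-1)) volume x 1 :=
    fun b hb => II_powmax ⟨hα1, hα2⟩ hb hx0 one_pos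
  have hb1 : ∀ k, k ∈ Finset.range m → (((k:ℝ)+1)/m) ≤ 1 := by
    intro k hk
    rw [div_le_one hmr]
    exact_mod_cast Nat.succ_le_of_lt (Finset.mem_range.1 hk)
  have hb0 : ∀ k, k ∈ Finset.range m → ((k:ℝ)/m) ≤ 1 := by
    intro k hk
    rw [div_le_one hmr]
    have := Finset.mem_range.1 hk
    exact_mod_cast le_of_lt (by exact_mod_cast this : (k:ℝ) < m)
  rw [intervalIntegral.integral_finset_sum (fun k hk =>
    (((hII _ (hb1 k hk)).sub (hII _ (hb0 k hk))).const_mul _))]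
  have h2 : ∀ k ∈ Finset.range m,
      (∫ y in x..(1:ℝ), (A k - c) *
          ((y - x) ^ (1-α) * (max (((k:ℝ)+1)/m - y) 0) ^ (α-1)
            - (y - x) ^ (1-α) * (max ((k:ℝ)/m - y) 0) ^ (α-1)))
        = (A k - c) * ((max (((k:ℝ)+1)/m - x) 0 - max ((k:ℝ)/m - x) 0) *
            (Real.Gamma (2-α) * Real.Gamma α)) := by
    intro k hk
    rw [intervalIntegral.integral_const_mul,
      intervalIntegral.integral_sub (hII _ (hb1 k hk)) (hII _ (hb0 k hk)),
      Qval ⟨hα1, hα2⟩ hx0 hx1 (hb1 k hk), Qval ⟨hα1, hα2⟩ hx0 hx1 (hb0 k hk)]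
    ring
  rw [Finset.sum_congr rfl h2, Finset.mul_sum, ← Finset.sum_neg_distrib, Finset.mul_sum]
  apply Finset.sum_congr rfl
  intro k _
  field_simp

theorem hasDerivAt_max_sub {b x : ℝ} (h : x ≠ b) :
    HasDerivAt (fun y => max (b - y) 0) (if x < b then (-1:ℝ) else 0) x := by
  rcases lt_or_gt_of_ne h with hlt | hgt
  · rw [if_pos hlt]
    have hb : HasDerivAt (fun y : ℝ => b - y) (-1) x := by
      simpa using (hasDerivAt_id x).const_sub b
    apply hb.congr_of_eventuallyEq
    filter_upwards [(isOpen_Iio (a := b)).mem_nhds hlt] with y hy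
    rw [max_eq_left (by simp only [Set.mem_Iio] at hy; linarith : (0:ℝ) ≤ b - y)]
  · rw [if_neg (not_lt.2 hgt.le)]
    apply (hasDerivAt_const x (0:ℝ)).congr_of_eventuallyEq
    filter_upwards [(isOpen_Ioi (a := b)).mem_nhds hgt] with y hy
    rw [max_eq_right (by simp only [Set.mem_Ioi] at hy; linarith : b - y ≤ 0)]

theorem ae_ne_point (b : ℝ) : ∀ᵐ y : ℝ, y ≠ b := by
  have h : {y : ℝ | ¬ y ≠ b} = {b} := by ext y; simp
  rw [MeasureTheory.ae_iff, h]
  exact Real.volume_singleton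

theorem Wderiv {m : ℕ} (hm : 0 < m) (A : ℕ → ℝ) (c : ℝ) {k : ℕ} (hk : k < m)
    {x : ℝ} (hx : x ∈ Set.Ioo ((k:ℝ)/m) (((k:ℝ)+1)/m)) :
    HasDerivAt (fun y => ∑ j ∈ Finset.range m, (A j - c) *
        (max (((j:ℝ)+1)/m - y) 0 - max ((j:ℝ)/m - y) 0)) (-(A k - c)) x := by
  have hmr : (0:ℝ) < m := by exact_mod_cast hm
  have hne : ∀ j : ℕ, x ≠ (j:ℝ)/m := by
    intro j
    rcases le_or_gt j k with h | h
    · have hle : (j:ℝ)/m ≤ (k:ℝ)/m := by gcongr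
      exact (hle.trans_lt hx.1).ne'
    · have hle : ((k:ℝ)+1)/m ≤ (j:ℝ)/m := by
        gcongr
        push_cast
        exact_mod_cast Nat.succ_le_of_lt h
      exact (hx.2.trans_le hle).ne
  have hne' : ∀ j : ℕ, x ≠ ((j:ℝ)+1)/m := by
    intro j
    have := hne (j+1)
    push_cast at this
    exact this
  have hterm : ∀ j ∈ Finset.range m, HasDerivAt (fun y => (A j - c) *
      (max (((j:ℝ)+1)/m - y) 0 - max ((j:ℝ)/m - y) 0))
      ((A j - c) * ((if x < ((j:ℝ)+1)/m then (-1:ℝ) else 0)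
        - (if x < (j:ℝ)/m then (-1:ℝ) else 0))) x := by
    intro j _
    exact ((hasDerivAt_max_sub (hne' j)).sub (hasDerivAt_max_sub (hne j))).const_mul _
  have hsum := HasDerivAt.fun_sum hterm
  have hval : ∑ j ∈ Finset.range m, ((A j - c) * ((if x < ((j:ℝ)+1)/m then (-1:ℝ) else 0)
      - (if x < (j:ℝ)/m then (-1:ℝ) else 0))) = -(A k - c) := by
    rw [Finset.sum_eq_single k]
    · rw [if_pos hx.2, if_neg (not_lt.2 hx.1.le)]
      ring
    · intro j _ hjk
      rcases lt_or_gt_of_ne hjk with h | h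
      · have hle : ((j:ℝ)+1)/m ≤ (k:ℝ)/m := by
          gcongr
          push_cast
          exact_mod_cast Nat.succ_le_of_lt h
        have hle2 : (j:ℝ)/m ≤ (k:ℝ)/m := by gcongr
        rw [if_neg (not_lt.2 (hle.trans hx.1.le)), if_neg (not_lt.2 (hle2.trans hx.1.le))]
        ring
      · have hle : ((k:ℝ)+1)/m ≤ (j:ℝ)/m := by
          gcongr
          push_cast
          exact_mod_cast Nat.succ_le_of_lt h
        have hx1 : x < (j:ℝ)/m := hx.2.trans_le hle
        have hx2 : x < ((j:ℝ)+1)/m := hx1.trans_le (by gcongr <;> linarith)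
        rw [if_pos hx2, if_pos hx1]
        ring
    · intro h
      exact absurd (Finset.mem_range.2 hk) h
  rw [hval] at hsum
  exact hsum

/-- Discrete coercivity identity: for `α ∈ (3/2,2)` and a continuous piecewise
linear finite element function `u` on a uniform mesh with `u(0) = u(1) = 0`, the
test function `φ = -ₓI₁^{α-1}(P_V u')` satisfies
`a(u,φ) = -∫₀¹ u' · ᴿD₁^{α-1} φ dx = ‖u'‖²_{L²(0,1)}`. -/
theorem discrete_coercivity (α : ℝ) (hα : α ∈ Set.Ioo (3/2 : ℝ) 2)
    (m : ℕ) (hm : 0 < m) (u : ℝ → ℝ)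
    (hcont : ContinuousOn u (Set.Icc 0 1))
    (hpl : ∀ k : ℕ, k < m → ∃ a b : ℝ,
      ∀ x ∈ Set.Icc ((k : ℝ) / m) (((k : ℝ) + 1) / m), u x = a * x + b)
    (hu0 : u 0 = 0) (hu1 : u 1 = 0) :
    -∫ x in (0:ℝ)..1,
        deriv u x *
          rightRLDeriv (α - 1) (fun y => - rightFracInt (α - 1) (PV α (deriv u)) y) x
      = ∫ x in (0:ℝ)..1, (deriv u x) ^ 2 := by
  obtain ⟨hα1, hα2⟩ := hα
  have hmr : (0:ℝ) < m := by exact_mod_cast hm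
  have hpl' : ∀ k : ℕ, ∃ a b : ℝ, k < m →
      ∀ x ∈ Set.Icc ((k:ℝ)/m) (((k:ℝ)+1)/m), u x = a * x + b := by
    intro k
    by_cases h : k < m
    · obtain ⟨a, b, hab⟩ := hpl k h
      exact ⟨a, b, fun _ => hab⟩
    · exact ⟨0, 0, fun h' => absurd h' h⟩
  choose A B hAB using hpl'
  set c : ℝ := Real.Gamma α * rightFracInt (α - 1) (deriv u) 0 with hc
  have hd : ∀ k, k < m → ∀ x ∈ Set.Ioo ((k:ℝ)/m) (((k:ℝ)+1)/m), deriv u x = A k := by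
    intro k hk x hx
    have hev : u =ᶠ[nhds x] fun y => A k * y + B k := by
      filter_upwards [isOpen_Ioo.mem_nhds hx] with y hy
      exact hAB k hk y (Set.mem_Icc_of_Ioo hy)
    rw [hev.deriv_eq]
    have : HasDerivAt (fun y => A k * y + B k) (A k) x := by
      simpa using ((hasDerivAt_id x).const_mul (A k)).add_const (B k)
    exact this.deriv
  have hPV : PV α (deriv u) = fun s => deriv u s - c := by
    funext s
    simp only [PV]
    rfl
  have hkk : ∀ k : ℕ, (k:ℝ)/m < ((k:ℝ)+1)/m := by
    intro k
    gcongr <;> linarith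
  have hkey : ∀ k, k < m → ∀ x ∈ Set.Ioo ((k:ℝ)/m) (((k:ℝ)+1)/m),
      rightRLDeriv (α - 1) (fun y => - rightFracInt (α - 1) (PV α (deriv u)) y) x
        = -(A k - c) := by
    intro k hk x hx
    have hx01 : x ∈ Set.Ioo (0:ℝ) 1 := by
      constructor
      · exact lt_of_le_of_lt (by positivity) hx.1
      · refine hx.2.trans_le ?_
        rw [div_le_one hmr]
        exact_mod_cast Nat.succ_le_of_lt hk
    have hev : rightFracInt (2 - α) (fun y => - rightFracInt (α - 1) (fun s => deriv u s - c) y)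
        =ᶠ[nhds x] fun z => -(∑ j ∈ Finset.range m, (A j - c) *
          (max (((j:ℝ)+1)/m - z) 0 - max ((j:ℝ)/m - z) 0)) := by
      filter_upwards [isOpen_Ioo.mem_nhds hx01] with z hz
      exact Fval ⟨hα1, hα2⟩ hm A c (deriv u) hd hz.1 hz.2
    have hW := Wderiv hm A c hk hx
    have hWn : HasDerivAt (fun z => -(∑ j ∈ Finset.range m, (A j - c) *
        (max (((j:ℝ)+1)/m - z) 0 - max ((j:ℝ)/m - z) 0))) (A k - c) x := by
      simpa using hW.fun_neg
    simp only [rightRLDeriv, hPV]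
    rw [show (1:ℝ) - (α - 1) = 2 - α by ring]
    rw [hev.deriv_eq, hWn.deriv]
  set f : ℝ → ℝ := fun x => deriv u x *
    rightRLDeriv (α - 1) (fun y => - rightFracInt (α - 1) (PV α (deriv u)) y) x with hf
  have hae1 : ∀ k, k < m → ∀ᵐ y : ℝ, y ∈ Set.uIoc ((k:ℝ)/m) (((k:ℝ)+1)/m) →
      f y = A k * (-(A k - c)) := by
    intro k hk
    filter_upwards [ae_ne_point (((k:ℝ)+1)/m)] with y hne hy
    rw [Set.uIoc_of_le (hkk k).le] at hy
    have hyo : y ∈ Set.Ioo ((k:ℝ)/m) (((k:ℝ)+1)/m) := ⟨hy.1, lt_of_le_of_ne hy.2 hne⟩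
    rw [hf]
    simp only
    rw [hd k hk y hyo, hkey k hk y hyo]
  have hae2 : ∀ k, k < m → ∀ᵐ y : ℝ, y ∈ Set.uIoc ((k:ℝ)/m) (((k:ℝ)+1)/m) →
      (deriv u y) ^ 2 = A k ^ 2 := by
    intro k hk
    filter_upwards [ae_ne_point (((k:ℝ)+1)/m)] with y hne hy
    rw [Set.uIoc_of_le (hkk k).le] at hy
    have hyo : y ∈ Set.Ioo ((k:ℝ)/m) (((k:ℝ)+1)/m) := ⟨hy.1, lt_of_le_of_ne hy.2 hne⟩
    rw [hd k hk y hyo]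
  have hlen : ∀ k : ℕ, ((k:ℝ)+1)/m - (k:ℝ)/m = 1/m := by
    intro k
    field_simp
    ring
  have hfint : ∀ k, k < m → IntervalIntegrable f volume ((k:ℝ)/m) (((k:ℝ)+1)/m) := by
    intro k hk
    refine (intervalIntegrable_const (c := A k * (-(A k - c)))).congr_ae ?_
    refine (MeasureTheory.ae_restrict_iff' measurableSet_uIoc).2 ?_
    exact (hae1 k hk).mono fun y h hy => (h hy).symm
  have hgint : ∀ k, k < m → IntervalIntegrable (fun y => (deriv u y) ^ 2) volume
      ((k:ℝ)/m) (((k:ℝ)+1)/m) := by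
    intro k hk
    refine (intervalIntegrable_const (c := A k ^ 2)).congr_ae ?_
    refine (MeasureTheory.ae_restrict_iff' measurableSet_uIoc).2 ?_
    exact (hae2 k hk).mono fun y h hy => (h hy).symm
  have hval1 : ∀ k, k < m → (∫ x in ((k:ℝ)/m)..(((k:ℝ)+1)/m), f x)
      = A k * (-(A k - c)) * (1/m) := by
    intro k hk
    rw [intervalIntegral.integral_congr_ae (hae1 k hk), intervalIntegral.integral_const,
      smul_eq_mul, hlen k]
    ring
  have hval2 : ∀ k, k < m → (∫ x in ((k:ℝ)/m)..(((k:ℝ)+1)/m), (deriv u x) ^ 2)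
      = A k ^ 2 * (1/m) := by
    intro k hk
    rw [intervalIntegral.integral_congr_ae (hae2 k hk), intervalIntegral.integral_const,
      smul_eq_mul, hlen k]
    ring
  have hcast : ∀ k : ℕ, ((k+1 : ℕ) : ℝ)/m = ((k:ℝ)+1)/m := by
    intro k
    push_cast
    ring
  have hsum1 : ∑ k ∈ Finset.range m, (∫ x in ((k:ℝ)/m)..(((k:ℝ)+1)/m), f x)
      = ∫ x in (0:ℝ)..1, f x := by
    have h := intervalIntegral.sum_integral_adjacent_intervals (μ := volume)
      (a := fun k : ℕ => (k:ℝ)/m) (n := m) (f := f) ?_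
    · rw [show ((0:ℕ):ℝ)/m = 0 by norm_num, show ((m:ℕ):ℝ)/m = 1 from div_self (ne_of_gt hmr)] at h
      rw [← h]
      refine Finset.sum_congr rfl fun k _ => ?_
      beta_reduce
      rw [hcast k]
    · intro k hk
      beta_reduce
      rw [hcast k]
      exact hfint k hk
  have hsum2 : ∑ k ∈ Finset.range m, (∫ x in ((k:ℝ)/m)..(((k:ℝ)+1)/m), (deriv u x) ^ 2)
      = ∫ x in (0:ℝ)..1, (deriv u x) ^ 2 := by
    have h := intervalIntegral.sum_integral_adjacent_intervals (μ := volume)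
      (a := fun k : ℕ => (k:ℝ)/m) (n := m) (f := fun y => (deriv u y) ^ 2) ?_
    · rw [show ((0:ℕ):ℝ)/m = 0 by norm_num, show ((m:ℕ):ℝ)/m = 1 from div_self (ne_of_gt hmr)] at h
      rw [← h]
      refine Finset.sum_congr rfl fun k _ => ?_
      beta_reduce
      rw [hcast k]
    · intro k hk
      beta_reduce
      rw [hcast k]
      exact hgint k hk
  have htel : ∑ k ∈ Finset.range m, A k * (1/m) = 0 := by
    have hstep : ∀ k ∈ Finset.range m, A k * (1/m)
        = (fun j : ℕ => u ((j:ℝ)/m)) (k+1) - (fun j : ℕ => u ((j:ℝ)/m)) k := by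
      intro k hk
      have hk' := Finset.mem_range.1 hk
      have h1 : u ((k:ℝ)/m) = A k * ((k:ℝ)/m) + B k :=
        hAB k hk' _ ⟨le_refl _, (hkk k).le⟩
      have h2 : u (((k:ℝ)+1)/m) = A k * (((k:ℝ)+1)/m) + B k :=
        hAB k hk' _ ⟨(hkk k).le, le_refl _⟩
      simp only [hcast k, h1, h2]
      rw [← hlen k]
      ring
    rw [Finset.sum_congr rfl hstep, Finset.sum_range_sub (fun j : ℕ => u ((j:ℝ)/m))]
    beta_reduce
    rw [show ((m:ℕ):ℝ)/m = 1 from div_self (ne_of_gt hmr),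
      show ((0:ℕ):ℝ)/m = 0 by norm_num, hu1, hu0, sub_zero]
  rw [← hsum1, ← hsum2, Finset.sum_congr rfl (fun k hk => hval1 k (Finset.mem_range.1 hk)),
    Finset.sum_congr rfl (fun k hk => hval2 k (Finset.mem_range.1 hk)),
    ← Finset.sum_neg_distrib]
  have hsplit : ∀ k ∈ Finset.range m, -(A k * (-(A k - c)) * (1/m))
      = A k ^ 2 * (1/m) - c * (A k * (1/m)) := by
    intro k _
    ring
  rw [Finset.sum_congr rfl hsplit, Finset.sum_sub_distrib, ← Finset.mul_sum, htel,
    mul_zero, sub_zero]
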